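/- Every invertible matrix P over a skew Laurent polynomial ring K[t^{±1}] over a skew field (a Euclidean domain) is a product of elementary matrices and invertible diagonal matrices over K[t^{±1}], and consequently the degree of its Dieudonné determinant (computed in the skew field of fractions) is zero. -/

import Mathlib

set_option maxHeartbeats 1000000

/-- Degree on a skew Laurent polynomial ring from the representation function. -/
def lauDeg {L K : Type*} [Zero K] (rep : L → (ℤ →₀ K)) (x : L) : ℤ :=
  (WithBot.unbotD 0 (rep x).support.max) - (WithTop.untopD 0 (rep x).support.min)

/-- Bundle of the skew-Laurent data. -/
structure SLData (K L : Type*) [DivisionRing K] [Ring L] where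
  σ : K ≃+* K
  ι₀ : K →+* L
  hι₀ : Function.Injective ι₀
  t : Lˣ
  hcomm : ∀ a : K, ι₀ a * t = t * ι₀ (σ a)
  rep : L → (ℤ →₀ K)
  hrep : ∀ x : L, x = (rep x).sum fun n a => ((t ^ n : Lˣ) : L) * ι₀ a
  hrep_unique : ∀ (x : L) (f : ℤ →₀ K),
      x = (f.sum fun n a => ((t ^ n : Lˣ) : L) * ι₀ a) → f = rep x

namespace SLData

variable {K L : Type*} [DivisionRing K] [Ring L] (S : SLData K L)

/-- Monomial -/
def mon (n : ℤ) (a : K) : L := ((S.t ^ n : Lˣ) : L) * S.ι₀ a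

/-- iterate of σ as an automorphism power -/
def sig (n : ℤ) : K ≃+* K := (S.σ ^ n : K ≃+* K)

lemma sig_ne_zero {n : ℤ} {a : K} (ha : a ≠ 0) : S.sig n a ≠ 0 := by
  intro h
  apply ha
  have := congrArg (S.sig n).symm h
  simpa using this

lemma sig_add_one (n : ℤ) (a : K) : S.sig (n + 1) a = S.σ (S.sig n a) := by
  show (S.σ ^ (n+1)) a = S.σ ((S.σ ^ n) a)
  rw [add_comm, zpow_add, zpow_one]
  rfl

lemma sig_sub_one (n : ℤ) (a : K) : S.sig (n - 1) a = S.σ.symm (S.sig n a) := by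
  show (S.σ ^ (n-1)) a = S.σ.symm ((S.σ ^ n) a)
  rw [sub_eq_add_neg, add_comm, zpow_add, zpow_neg, zpow_one]
  rfl

lemma comm_pow (n : ℤ) (a : K) :
    S.ι₀ a * ((S.t ^ n : Lˣ) : L) = ((S.t ^ n : Lˣ) : L) * S.ι₀ (S.sig n a) := by
  have key1 : ∀ a : K, S.ι₀ a * (S.t : L) = (S.t : L) * S.ι₀ (S.σ a) := S.hcomm
  have key2 : ∀ a : K, S.ι₀ a * ((S.t⁻¹ : Lˣ) : L) = ((S.t⁻¹ : Lˣ) : L) * S.ι₀ (S.σ.symm a) := by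
    intro a
    have h1 := key1 (S.σ.symm a)
    rw [RingEquiv.apply_symm_apply] at h1
    have h2 : ((S.t⁻¹ : Lˣ) : L) * (S.ι₀ (S.σ.symm a) * (S.t : L)) * ((S.t⁻¹ : Lˣ) : L)
        = ((S.t⁻¹ : Lˣ) : L) * ((S.t : L) * S.ι₀ a) * ((S.t⁻¹ : Lˣ) : L) := by rw [h1]
    calc S.ι₀ a * ((S.t⁻¹ : Lˣ) : L)
        = ((S.t⁻¹ : Lˣ) : L) * ((S.t : L) * S.ι₀ a) * ((S.t⁻¹ : Lˣ) : L) := by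
          rw [← mul_assoc]
          simp
      _ = ((S.t⁻¹ : Lˣ) : L) * (S.ι₀ (S.σ.symm a) * (S.t : L)) * ((S.t⁻¹ : Lˣ) : L) := by rw [h1]
      _ = ((S.t⁻¹ : Lˣ) : L) * S.ι₀ (S.σ.symm a) := by
          rw [mul_assoc, mul_assoc]
          simp
  induction n using Int.induction_on with
  | zero =>
      simp only [zpow_zero, Units.val_one, one_mul, mul_one]
      rfl
  | succ k ih =>
      have e : ((S.t ^ ((k:ℤ)+1) : Lˣ) : L) = ((S.t ^ (k:ℤ) : Lˣ) : L) * (S.t : L) := by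
        rw [zpow_add_one]; rfl
      rw [e, ← mul_assoc, ih, mul_assoc, key1, ← mul_assoc, S.sig_add_one]
  | pred k ih =>
      have e : ((S.t ^ (-(k:ℤ)-1) : Lˣ) : L) = ((S.t ^ (-(k:ℤ)) : Lˣ) : L) * ((S.t⁻¹ : Lˣ) : L) := by
        rw [zpow_sub_one]; rfl
      rw [e, ← mul_assoc, ih, mul_assoc, key2, ← mul_assoc, S.sig_sub_one]

lemma mon_mul_mon (n m : ℤ) (a c : K) :
    S.mon n a * S.mon m c = S.mon (n + m) (S.sig m a * c) := by
  unfold mon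
  rw [mul_assoc, ← mul_assoc (S.ι₀ a), S.comm_pow m a, zpow_add, Units.val_mul,
    map_mul]
  simp [mul_assoc]

@[simp] lemma mon_coeff_zero (n : ℤ) : S.mon n (0 : K) = 0 := by simp [mon]

lemma mon_coeff_add (n : ℤ) (a b : K) : S.mon n (a + b) = S.mon n a + S.mon n b := by
  simp [mon, map_add, mul_add]

lemma rep_eq (x : L) (f : ℤ →₀ K) (h : x = f.sum fun n a => S.mon n a) : S.rep x = f :=
  (S.hrep_unique x f h).symm

lemma sum_mon_rep (x : L) : (S.rep x).sum (fun n a => S.mon n a) = x := (S.hrep x).symm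

@[simp] lemma rep_zero : S.rep 0 = 0 := S.rep_eq 0 0 (by simp)

lemma eq_zero_iff_rep (x : L) : x = 0 ↔ S.rep x = 0 := by
  constructor
  · rintro rfl; simp
  · intro h
    have := S.sum_mon_rep x
    rw [h] at this
    simpa using this.symm

lemma rep_mon (n : ℤ) (a : K) : S.rep (S.mon n a) = Finsupp.single n a :=
  S.rep_eq _ _ (by rw [Finsupp.sum_single_index (S.mon_coeff_zero n)])

lemma rep_one : S.rep 1 = Finsupp.single 0 1 := by
  have : (1 : L) = S.mon 0 1 := by simp [mon]
  rw [this, rep_mon]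

lemma rep_add (x y : L) : S.rep (x + y) = S.rep x + S.rep y :=
  S.rep_eq _ _ (by
    rw [Finsupp.sum_add_index' (fun n => S.mon_coeff_zero n) (fun n a b => S.mon_coeff_add n a b)]
    rw [← S.sum_mon_rep x, ← S.sum_mon_rep y]
    simp [S.sum_mon_rep])

lemma rep_neg (x : L) : S.rep (-x) = -S.rep x := by
  have := S.rep_add x (-x)
  simp only [add_neg_cancel, rep_zero] at this
  exact (eq_neg_of_add_eq_zero_right this.symm)

lemma rep_sub (x y : L) : S.rep (x - y) = S.rep x - S.rep y := by
  rw [sub_eq_add_neg, rep_add, rep_neg, sub_eq_add_neg]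

lemma rep_mon_mul (n : ℤ) (a : K) (b : L) :
    S.rep (S.mon n a * b)
      = (S.rep b).sum fun m c => Finsupp.single (n + m) (S.sig m a * c) := by
  apply S.rep_eq
  conv_lhs => rw [← S.sum_mon_rep b]
  rw [Finsupp.mul_sum]
  rw [Finsupp.sum_sum_index (fun i => S.mon_coeff_zero i)
    (fun i a b => S.mon_coeff_add i a b)]
  apply Finsupp.sum_congr
  intro m hm
  rw [Finsupp.sum_single_index (S.mon_coeff_zero _), mon_mul_mon]

lemma sig_sig (n m : ℤ) (x : K) : S.sig n (S.sig m x) = S.sig (n + m) x := by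
  show (S.σ ^ n) ((S.σ ^ m) x) = (S.σ ^ (n + m)) x
  rw [zpow_add]
  rfl

lemma sig_zero_apply (x : K) : S.sig 0 x = x := rfl

lemma rep_mon_mul_apply (n : ℤ) (a : K) (b : L) (m₀ : ℤ) :
    S.rep (S.mon n a * b) (n + m₀) = S.sig m₀ a * S.rep b m₀ := by
  rw [rep_mon_mul, Finsupp.sum_apply]
  rw [Finsupp.sum]
  simp_rw [Finsupp.single_apply, add_right_inj]
  rw [Finset.sum_ite_eq' (S.rep b).support m₀ (fun m => S.sig m a * S.rep b m)]
  split_ifs with h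
  · rfl
  · rw [Finsupp.notMem_support_iff.mp h, mul_zero]

lemma support_rep_mon_mul_subset (n : ℤ) (a : K) (b : L) :
    (S.rep (S.mon n a * b)).support ⊆ (S.rep b).support.image (n + ·) := by
  rw [rep_mon_mul]
  refine Finsupp.support_sum.trans ?_
  intro k hk
  rw [Finset.mem_biUnion] at hk
  obtain ⟨m, hm, hk⟩ := hk
  have := Finsupp.support_single_subset hk
  rw [Finset.mem_singleton] at this
  subst this
  exact Finset.mem_image.mpr ⟨m, hm, rfl⟩

lemma support_rep_mon_mul (n : ℤ) {a : K} (ha : a ≠ 0) (b : L) :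
    (S.rep (S.mon n a * b)).support = (S.rep b).support.image (n + ·) := by
  apply Finset.Subset.antisymm (S.support_rep_mon_mul_subset n a b)
  intro k hk
  rw [Finset.mem_image] at hk
  obtain ⟨m, hm, rfl⟩ := hk
  rw [Finsupp.mem_support_iff, rep_mon_mul_apply]
  exact mul_ne_zero (S.sig_ne_zero ha) (Finsupp.mem_support_iff.mp hm)

/-- top degree -/
def top (x : L) : ℤ := WithBot.unbotD 0 (S.rep x).support.max
/-- bottom degree -/
def bot (x : L) : ℤ := WithTop.untopD 0 (S.rep x).support.min

lemma lauDeg_eq (x : L) : lauDeg S.rep x = S.top x - S.bot x := rfl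

lemma supp_nonempty {x : L} (hx : x ≠ 0) : (S.rep x).support.Nonempty := by
  rw [Finset.nonempty_iff_ne_empty, Ne, Finsupp.support_eq_empty]
  exact fun h => hx ((S.eq_zero_iff_rep x).mpr h)

lemma top_eq_max' {x : L} (hx : x ≠ 0) :
    S.top x = (S.rep x).support.max' (S.supp_nonempty hx) := by
  rw [top, ← Finset.coe_max' (S.supp_nonempty hx), WithBot.unbotD_coe]

lemma bot_eq_min' {x : L} (hx : x ≠ 0) :
    S.bot x = (S.rep x).support.min' (S.supp_nonempty hx) := by
  rw [bot, ← Finset.coe_min' (S.supp_nonempty hx), WithTop.untopD_coe]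

lemma top_mem {x : L} (hx : x ≠ 0) : S.top x ∈ (S.rep x).support := by
  rw [S.top_eq_max' hx]; exact Finset.max'_mem _ _

lemma bot_mem {x : L} (hx : x ≠ 0) : S.bot x ∈ (S.rep x).support := by
  rw [S.bot_eq_min' hx]; exact Finset.min'_mem _ _

lemma le_top {x : L} (hx : x ≠ 0) {k : ℤ} (hk : k ∈ (S.rep x).support) : k ≤ S.top x := by
  rw [S.top_eq_max' hx]; exact Finset.le_max' _ _ hk

lemma bot_le {x : L} (hx : x ≠ 0) {k : ℤ} (hk : k ∈ (S.rep x).support) : S.bot x ≤ k := by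
  rw [S.bot_eq_min' hx]; exact Finset.min'_le _ _ hk

lemma lauDeg_nonneg {x : L} (hx : x ≠ 0) : 0 ≤ lauDeg S.rep x := by
  rw [lauDeg_eq, sub_nonneg]
  exact S.bot_le hx (S.top_mem hx)

lemma top_coeff_ne_zero {x : L} (hx : x ≠ 0) : S.rep x (S.top x) ≠ 0 :=
  Finsupp.mem_support_iff.mp (S.top_mem hx)

lemma bot_coeff_ne_zero {x : L} (hx : x ≠ 0) : S.rep x (S.bot x) ≠ 0 :=
  Finsupp.mem_support_iff.mp (S.bot_mem hx)

lemma top_eq_of {x : L} (hx : x ≠ 0) {k : ℤ} (h1 : k ∈ (S.rep x).support)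
    (h2 : ∀ j ∈ (S.rep x).support, j ≤ k) : S.top x = k :=
  le_antisymm (h2 _ (S.top_mem hx)) (S.le_top hx h1)

lemma bot_eq_of {x : L} (hx : x ≠ 0) {k : ℤ} (h1 : k ∈ (S.rep x).support)
    (h2 : ∀ j ∈ (S.rep x).support, k ≤ j) : S.bot x = k :=
  le_antisymm (S.bot_le hx h1) (h2 _ (S.bot_mem hx))

lemma lauDeg_le {x : L} (hx : x ≠ 0) {lo hi : ℤ}
    (h : ∀ k ∈ (S.rep x).support, lo ≤ k ∧ k ≤ hi) : lauDeg S.rep x ≤ hi - lo := by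
  rw [lauDeg_eq]
  have h1 : S.top x ≤ hi := (h _ (S.top_mem hx)).2
  have h2 : lo ≤ S.bot x := (h _ (S.bot_mem hx)).1
  omega

lemma top_mon_mul (n : ℤ) {a : K} (ha : a ≠ 0) {b : L} (hb : b ≠ 0) :
    S.top (S.mon n a * b) = n + S.top b := by
  have hne : S.mon n a * b ≠ 0 := by
    rw [Ne, S.eq_zero_iff_rep, ← Finsupp.support_eq_empty,
      S.support_rep_mon_mul n ha b, Finset.image_eq_empty, Finsupp.support_eq_empty,
      ← S.eq_zero_iff_rep]
    exact hb
  apply S.top_eq_of hne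
  · rw [S.support_rep_mon_mul n ha b]
    exact Finset.mem_image.mpr ⟨_, S.top_mem hb, rfl⟩
  · intro j hj
    rw [S.support_rep_mon_mul n ha b, Finset.mem_image] at hj
    obtain ⟨m, hm, rfl⟩ := hj
    have := S.le_top hb hm
    omega

lemma bot_mon_mul (n : ℤ) {a : K} (ha : a ≠ 0) {b : L} (hb : b ≠ 0) :
    S.bot (S.mon n a * b) = n + S.bot b := by
  have hne : S.mon n a * b ≠ 0 := by
    rw [Ne, S.eq_zero_iff_rep, ← Finsupp.support_eq_empty,
      S.support_rep_mon_mul n ha b, Finset.image_eq_empty, Finsupp.support_eq_empty,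
      ← S.eq_zero_iff_rep]
    exact hb
  apply S.bot_eq_of hne
  · rw [S.support_rep_mon_mul n ha b]
    exact Finset.mem_image.mpr ⟨_, S.bot_mem hb, rfl⟩
  · intro j hj
    rw [S.support_rep_mon_mul n ha b, Finset.mem_image] at hj
    obtain ⟨m, hm, rfl⟩ := hj
    have := S.bot_le hb hm
    omega

lemma lauDeg_zero : lauDeg S.rep (0 : L) = 0 := by
  simp [lauDeg, S.rep_zero]

lemma div_step {a b : L} (ha : a ≠ 0) (hb : b ≠ 0)
    (hd : lauDeg S.rep b ≤ lauDeg S.rep a) :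
    ∃ q r : L, a = q * b + r ∧ (r = 0 ∨ lauDeg S.rep r < lauDeg S.rep a) := by
  set Ta := S.top a with hTa
  set Tb := S.top b with hTb
  set Ba := S.bot a with hBa
  set Bb := S.bot b with hBb
  set la := S.rep a Ta with hla
  set lb := S.rep b Tb with hlb
  have hla0 : la ≠ 0 := S.top_coeff_ne_zero ha
  have hlb0 : lb ≠ 0 := S.top_coeff_ne_zero hb
  set cq : K := S.sig (-Tb) (la * lb⁻¹) with hcq
  have hcq0 : cq ≠ 0 := S.sig_ne_zero (mul_ne_zero hla0 (inv_ne_zero hlb0))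
  set q : L := S.mon (Ta - Tb) cq with hq
  refine ⟨q, a - q * b, by abel, ?_⟩
  by_cases hr : a - q * b = 0
  · exact Or.inl hr
  right
  -- the top coefficient of q*b at Ta equals la
  have hcoeff : S.rep (q * b) Ta = la := by
    have h1 : (Ta - Tb) + Tb = Ta := by ring
    have := S.rep_mon_mul_apply (Ta - Tb) cq b Tb
    rw [h1] at this
    rw [this, hcq, sig_sig]
    have h2 : Tb + -Tb = 0 := by ring
    rw [h2, sig_zero_apply, ← hlb, mul_assoc, inv_mul_cancel₀ hlb0, mul_one]
  -- support bounds
  have hsupp : ∀ k ∈ (S.rep (a - q * b)).support, Ba ≤ k ∧ k ≤ Ta - 1 := by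
    intro k hk
    rw [Finsupp.mem_support_iff, S.rep_sub, Finsupp.sub_apply] at hk
    have hkTa : k ≠ Ta := by
      intro h
      rw [h, hcoeff, ← hla, sub_self] at hk
      exact hk rfl
    have hmem : k ∈ (S.rep a).support ∨ k ∈ (S.rep (q * b)).support := by
      by_contra hc
      push_neg at hc
      rw [Finsupp.notMem_support_iff.mp hc.1, Finsupp.notMem_support_iff.mp hc.2,
        sub_self] at hk
      exact hk rfl
    have hbound : Ba ≤ k ∧ k ≤ Ta := by
      rcases hmem with h | h
      · exact ⟨S.bot_le ha h, S.le_top ha h⟩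
      · rw [hq, S.support_rep_mon_mul _ hcq0 b, Finset.mem_image] at h
        obtain ⟨m, hm, rfl⟩ := h
        have h1 := S.le_top hb hm
        have h2 := S.bot_le hb hm
        have h3 : Tb - Bb ≤ Ta - Ba := hd
        constructor <;> omega
    omega
  have := S.lauDeg_le hr hsupp
  have hnn := S.lauDeg_nonneg ha
  have : lauDeg S.rep a = Ta - Ba := rfl
  omega

lemma div_aux (N : ℕ) : ∀ a b : L, b ≠ 0 → (lauDeg S.rep a).toNat ≤ N →
    ∃ q r : L, a = q * b + r ∧ (r = 0 ∨ lauDeg S.rep r < lauDeg S.rep b) := by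
  induction N with
  | zero =>
      intro a b hb hdeg
      by_cases ha : a = 0
      · exact ⟨0, 0, by simp [ha], Or.inl rfl⟩
      by_cases h : lauDeg S.rep a < lauDeg S.rep b
      · exact ⟨0, a, by simp, Or.inr h⟩
      push_neg at h
      obtain ⟨q, r, h1, h2⟩ := S.div_step ha hb h
      rcases h2 with h2 | h2
      · exact ⟨q, r, h1, Or.inl h2⟩
      · exfalso
        have h3 := S.lauDeg_nonneg ha
        have h4 : lauDeg S.rep a = 0 := by omega
        by_cases hr : r = 0
        · subst hr
          rw [S.lauDeg_zero] at h2; omega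
        · have := S.lauDeg_nonneg hr; omega
  | succ N ih =>
      intro a b hb hdeg
      by_cases ha : a = 0
      · exact ⟨0, 0, by simp [ha], Or.inl rfl⟩
      by_cases h : lauDeg S.rep a < lauDeg S.rep b
      · exact ⟨0, a, by simp, Or.inr h⟩
      push_neg at h
      obtain ⟨q, r, h1, h2⟩ := S.div_step ha hb h
      rcases h2 with h2 | h2
      · exact ⟨q, r, h1, Or.inl h2⟩
      · have h3 := S.lauDeg_nonneg ha
        have hr : (lauDeg S.rep r).toNat ≤ N := by omega
        obtain ⟨q', r', h1', h2'⟩ := ih r b hb hr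
        exact ⟨q + q', r', by rw [h1, h1', add_mul, add_assoc], h2'⟩

/-- Division with remainder. -/
lemma division (a : L) {b : L} (hb : b ≠ 0) :
    ∃ q r : L, a = q * b + r ∧ (r = 0 ∨ lauDeg S.rep r < lauDeg S.rep b) :=
  S.div_aux (lauDeg S.rep a).toNat a b hb le_rfl

lemma rep_sum {α : Type*} (s : Finset α) (f : α → L) :
    S.rep (∑ i ∈ s, f i) = ∑ i ∈ s, S.rep (f i) := by
  classical
  induction s using Finset.cons_induction with
  | empty => simp
  | cons a s ha ih => rw [Finset.sum_cons, Finset.sum_cons, S.rep_add, ih]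

lemma rep_mul_apply_top {x y : L} (hx : x ≠ 0) (hy : y ≠ 0) :
    S.rep (x * y) (S.top x + S.top y)
      = S.sig (S.top y) (S.rep x (S.top x)) * S.rep y (S.top y) := by
  have hxy : x * y = ∑ n ∈ (S.rep x).support, S.mon n (S.rep x n) * y := by
    conv_lhs => rw [← S.sum_mon_rep x]
    rw [Finsupp.sum_mul]
    rfl
  rw [hxy, S.rep_sum, Finset.sum_apply']
  rw [Finset.sum_eq_single_of_mem (S.top x) (S.top_mem hx)]
  · exact S.rep_mon_mul_apply _ _ y (S.top y)
  · intro n hn hne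
    apply Finsupp.notMem_support_iff.mp
    intro hmem
    have := S.support_rep_mon_mul_subset n (S.rep x n) y hmem
    rw [Finset.mem_image] at this
    obtain ⟨m, hm, hEq⟩ := this
    have h1 := S.le_top hy hm
    have h2 : n ≤ S.top x := S.le_top hx hn
    have h3 : n ≠ S.top x := hne
    omega

lemma rep_mul_apply_bot {x y : L} (hx : x ≠ 0) (hy : y ≠ 0) :
    S.rep (x * y) (S.bot x + S.bot y)
      = S.sig (S.bot y) (S.rep x (S.bot x)) * S.rep y (S.bot y) := by
  have hxy : x * y = ∑ n ∈ (S.rep x).support, S.mon n (S.rep x n) * y := by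
    conv_lhs => rw [← S.sum_mon_rep x]
    rw [Finsupp.sum_mul]
    rfl
  rw [hxy, S.rep_sum, Finset.sum_apply']
  rw [Finset.sum_eq_single_of_mem (S.bot x) (S.bot_mem hx)]
  · exact S.rep_mon_mul_apply _ _ y (S.bot y)
  · intro n hn hne
    apply Finsupp.notMem_support_iff.mp
    intro hmem
    have := S.support_rep_mon_mul_subset n (S.rep x n) y hmem
    rw [Finset.mem_image] at this
    obtain ⟨m, hm, hEq⟩ := this
    have h1 := S.bot_le hy hm
    have h2 : S.bot x ≤ n := S.bot_le hx hn
    have h3 : n ≠ S.bot x := hne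
    omega

lemma support_mul_bound {x y : L} {k : ℤ} (hx : x ≠ 0) (hy : y ≠ 0)
    (hk : k ∈ (S.rep (x * y)).support) :
    S.bot x + S.bot y ≤ k ∧ k ≤ S.top x + S.top y := by
  have hxy : x * y = ∑ n ∈ (S.rep x).support, S.mon n (S.rep x n) * y := by
    conv_lhs => rw [← S.sum_mon_rep x]
    rw [Finsupp.sum_mul]
    rfl
  rw [hxy, S.rep_sum] at hk
  have := Finsupp.support_finset_sum hk
  rw [Finset.mem_biUnion] at this
  obtain ⟨n, hn, hkmem⟩ := this
  have := S.support_rep_mon_mul_subset n (S.rep x n) y hkmem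
  rw [Finset.mem_image] at this
  obtain ⟨m, hm, rfl⟩ := this
  have h1 := S.le_top hy hm
  have h2 := S.bot_le hy hm
  have h3 := S.le_top hx hn
  have h4 := S.bot_le hx hn
  omega

include S in
lemma mul_ne_zero' {x y : L} (hx : x ≠ 0) (hy : y ≠ 0) : x * y ≠ 0 := by
  intro h
  have h1 := S.rep_mul_apply_top hx hy
  rw [h, S.rep_zero] at h1
  exact mul_ne_zero (S.sig_ne_zero (S.top_coeff_ne_zero hx)) (S.top_coeff_ne_zero hy) h1.symm

lemma top_mul {x y : L} (hx : x ≠ 0) (hy : y ≠ 0) : S.top (x * y) = S.top x + S.top y :=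
  S.top_eq_of (S.mul_ne_zero' hx hy)
    (Finsupp.mem_support_iff.mpr (by
      rw [S.rep_mul_apply_top hx hy]
      exact mul_ne_zero (S.sig_ne_zero (S.top_coeff_ne_zero hx)) (S.top_coeff_ne_zero hy)))
    (fun j hj => (S.support_mul_bound hx hy hj).2)

lemma bot_mul {x y : L} (hx : x ≠ 0) (hy : y ≠ 0) : S.bot (x * y) = S.bot x + S.bot y :=
  S.bot_eq_of (S.mul_ne_zero' hx hy)
    (Finsupp.mem_support_iff.mpr (by
      rw [S.rep_mul_apply_bot hx hy]
      exact mul_ne_zero (S.sig_ne_zero (S.bot_coeff_ne_zero hx)) (S.bot_coeff_ne_zero hy)))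
    (fun j hj => (S.support_mul_bound hx hy hj).1)

lemma lauDeg_mul {x y : L} (hx : x ≠ 0) (hy : y ≠ 0) :
    lauDeg S.rep (x * y) = lauDeg S.rep x + lauDeg S.rep y := by
  rw [lauDeg_eq, lauDeg_eq, lauDeg_eq, S.top_mul hx hy, S.bot_mul hx hy]
  ring

include S in
lemma one_ne_zero' : (1 : L) ≠ 0 := by
  intro h
  have := congrArg S.rep h
  rw [S.rep_one, S.rep_zero] at this
  rw [Finsupp.single_eq_zero] at this
  exact one_ne_zero this

lemma lauDeg_one : lauDeg S.rep (1 : L) = 0 := by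
  have : (S.rep (1:L)).support = {0} := by
    rw [S.rep_one]
    exact Finsupp.support_single_ne_zero _ one_ne_zero
  simp [lauDeg, this]

include S in
lemma lauDeg_unit (u : Lˣ) : lauDeg S.rep (u : L) = 0 := by
  have hu : (u : L) ≠ 0 := by
    intro h
    apply S.one_ne_zero'
    have := u.mul_inv
    rw [h, zero_mul] at this
    exact this.symm
  have hui : ((u⁻¹ : Lˣ) : L) ≠ 0 := by
    intro h
    apply S.one_ne_zero'
    have := u.inv_mul
    rw [h, zero_mul] at this
    exact this.symm
  have hmul : lauDeg S.rep ((u : L) * ((u⁻¹ : Lˣ) : L)) = lauDeg S.rep (u : L) + lauDeg S.rep ((u⁻¹ : Lˣ) : L) :=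
    S.lauDeg_mul hu hui
  have h1 : (u : L) * ((u⁻¹ : Lˣ) : L) = 1 := u.mul_inv
  rw [h1, S.lauDeg_one] at hmul
  have h2 := S.lauDeg_nonneg hu
  have h3 := S.lauDeg_nonneg hui
  omega

include S in
lemma isUnit_of_left_inv {g u : L} (hg : g ≠ 0) (h : u * g = 1) : g * u = 1 := by
  have h1 : (g * u - 1) * g = 0 := by
    rw [sub_mul, one_mul, mul_assoc, h, mul_one, sub_self]
  by_contra hne
  have : g * u - 1 ≠ 0 := fun hc => hne (by rwa [sub_eq_zero] at hc)
  exact S.mul_ne_zero' this hg h1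

end SLData

section MatrixStuff

variable {L : Type*} [Ring L]

/-- The set of elementary and invertible-diagonal matrices. -/
def ElemSet (L : Type*) [Ring L] (m : ℕ) : Set ((Matrix (Fin m) (Fin m) L)ˣ) :=
  {Q | (∃ (i j : Fin m) (c : L), i ≠ j ∧
          Q.val = 1 + Matrix.single i j c) ∨
        (∃ d : Fin m → Lˣ,
          Q.val = Matrix.diagonal fun i => (d i : L))}

lemma transvection_mul {m : ℕ} {i j : Fin m} (hij : i ≠ j) (c d : L) :
    (1 + Matrix.single i j c) * (1 + Matrix.single i j d)
      = 1 + Matrix.single i j (c + d) := by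
  rw [mul_add, mul_one, add_mul, one_mul,
    Matrix.single_mul_single_of_ne (h := Ne.symm hij), Matrix.single_add]
  rw [add_zero, add_assoc]

/-- Transvection unit. -/
def tUnit {m : ℕ} (i j : Fin m) (hij : i ≠ j) (c : L) : (Matrix (Fin m) (Fin m) L)ˣ where
  val := 1 + Matrix.single i j c
  inv := 1 + Matrix.single i j (-c)
  val_inv := by rw [transvection_mul hij, add_neg_cancel, Matrix.single_zero, add_zero]
  inv_val := by rw [transvection_mul hij, neg_add_cancel, Matrix.single_zero, add_zero]

lemma tUnit_mem {m : ℕ} (i j : Fin m) (hij : i ≠ j) (c : L) :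
    tUnit i j hij c ∈ ElemSet L m := Or.inl ⟨i, j, c, hij, rfl⟩

/-- Diagonal unit. -/
def dUnit {m : ℕ} (d : Fin m → Lˣ) : (Matrix (Fin m) (Fin m) L)ˣ where
  val := Matrix.diagonal fun i => (d i : L)
  inv := Matrix.diagonal fun i => ((d i)⁻¹ : Lˣ)
  val_inv := by rw [Matrix.diagonal_mul_diagonal]; simp
  inv_val := by rw [Matrix.diagonal_mul_diagonal]; simp

lemma dUnit_mem {m : ℕ} (d : Fin m → Lˣ) : dUnit d ∈ ElemSet L m := Or.inr ⟨d, rfl⟩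

/-- Row operation: entries of `(1 + E i j c) * M`. -/
lemma rowop_apply {m : ℕ} (i j : Fin m) (c : L) (M : Matrix (Fin m) (Fin m) L)
    (k l : Fin m) :
    ((1 + Matrix.single i j c) * M) k l
      = M k l + if k = i then c * M j l else 0 := by
  rw [add_mul, one_mul, Matrix.add_apply]
  congr 1
  split_ifs with h
  · rw [h]; exact Matrix.single_mul_apply_same c i j l M
  · exact Matrix.single_mul_apply_of_ne c i j k l h M

/-- Column operation: entries of `M * (1 + E i j c)`. -/
lemma colop_apply {m : ℕ} (i j : Fin m) (c : L) (M : Matrix (Fin m) (Fin m) L)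
    (k l : Fin m) :
    (M * (1 + Matrix.single i j c)) k l
      = M k l + if l = j then M k i * c else 0 := by
  rw [mul_add, mul_one, Matrix.add_apply]
  congr 1
  split_ifs with h
  · rw [h]; exact Matrix.mul_single_apply_same c i j k M
  · exact Matrix.mul_single_apply_of_ne c i j k l h M

end MatrixStuff

namespace SLData

variable {K L : Type*} [DivisionRing K] [Ring L] (S : SLData K L)

open Classical in
noncomputable def wt (x : L) : ℕ := if x = 0 then 0 else (lauDeg S.rep x).toNat + 1

lemma wt_pos {x : L} (hx : x ≠ 0) : 0 < S.wt x := by simp [wt, hx]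

lemma wt_lt_of {r x y : L} (hx : x ≠ 0) (hy : y ≠ 0)
    (h : r = 0 ∨ lauDeg S.rep r < lauDeg S.rep y)
    (hle : lauDeg S.rep y ≤ lauDeg S.rep x) : S.wt r < S.wt x := by
  by_cases hr : r = 0
  · rw [hr]; simpa [wt] using S.wt_pos hx
  · rcases h with h | h
    · exact absurd h hr
    have h1 := S.lauDeg_nonneg hr
    have h2 := S.lauDeg_nonneg hy
    simp only [wt, if_neg hr, if_neg hx]
    omega

lemma stageA (m : ℕ) : ∀ (N : ℕ) (P : (Matrix (Fin (m+1)) (Fin (m+1)) L)ˣ),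
    (∑ i, S.wt (P.val i 0)) ≤ N →
    ∃ E ∈ Subgroup.closure (ElemSet L (m+1)),
      ∃ i₀, ∀ i, i ≠ i₀ → (E * P).val i 0 = 0 := by
  intro N
  induction N using Nat.strong_induction_on with
  | _ N ih =>
  intro P hN
  by_cases hpair : ∃ i j : Fin (m+1), i ≠ j ∧ P.val i 0 ≠ 0 ∧ P.val j 0 ≠ 0
  · have key : ∀ (i j : Fin (m+1)), i ≠ j → P.val i 0 ≠ 0 → P.val j 0 ≠ 0 →
        lauDeg S.rep (P.val j 0) ≤ lauDeg S.rep (P.val i 0) →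
        ∃ E ∈ Subgroup.closure (ElemSet L (m+1)),
          ∃ i₀, ∀ i, i ≠ i₀ → (E * P).val i 0 = 0 := by
      intro i j hij hi hj hle
      obtain ⟨q, r, hqr, hr⟩ := S.division (P.val i 0) hj
      set E₁ := tUnit i j hij (-q) with hE₁
      have hA : ∀ k, (E₁ * P).val k 0
          = P.val k 0 + if k = i then (-q) * P.val j 0 else 0 := fun k => by
        rw [Units.val_mul]
        exact rowop_apply i j (-q) P.val k 0
      have hAi : (E₁ * P).val i 0 = r := by
        rw [hA i, if_pos rfl, hqr, neg_mul]
        abel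
      have hAk : ∀ k, k ≠ i → (E₁ * P).val k 0 = P.val k 0 := fun k hk => by
        rw [hA k, if_neg hk, add_zero]
      have hΦ : (∑ k, S.wt ((E₁ * P).val k 0)) < ∑ k, S.wt (P.val k 0) := by
        apply Finset.sum_lt_sum
        · intro k _
          by_cases hk : k = i
          · subst hk
            rw [hAi]
            exact le_of_lt (S.wt_lt_of hi hj hr hle)
          · rw [hAk k hk]
        · exact ⟨i, Finset.mem_univ i, by rw [hAi]; exact S.wt_lt_of hi hj hr hle⟩
      obtain ⟨E', hE', i₀, hcol⟩ :=
        ih _ (lt_of_lt_of_le hΦ hN) (E₁ * P) le_rfl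
      refine ⟨E' * E₁, mul_mem hE' (Subgroup.subset_closure (tUnit_mem i j hij (-q))), i₀,
        fun k hk => ?_⟩
      rw [mul_assoc]
      exact hcol k hk
    obtain ⟨i, j, hij, hi, hj⟩ := hpair
    rcases le_total (lauDeg S.rep (P.val j 0)) (lauDeg S.rep (P.val i 0)) with hle | hle
    · exact key i j hij hi hj hle
    · exact key j i (Ne.symm hij) hj hi hle
  · push_neg at hpair
    by_cases hz : ∀ i, P.val i 0 = 0
    · exact ⟨1, one_mem _, 0, fun i _ => by rw [one_mul]; exact hz i⟩
    · push_neg at hz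
      obtain ⟨i₀, hi₀⟩ := hz
      exact ⟨1, one_mem _, i₀, fun i hi => by
        rw [one_mul]
        exact hpair i₀ i (Ne.symm hi) hi₀⟩

include S in
lemma stageB (m : ℕ) (P : (Matrix (Fin (m+1)) (Fin (m+1)) L)ˣ) :
    ∃ E ∈ Subgroup.closure (ElemSet L (m+1)),
      (E * P).val 0 0 = 1 ∧ ∀ i, i ≠ 0 → (E * P).val i 0 = 0 := by
  classical
  obtain ⟨E₀, hE₀, i₀, hcol⟩ := S.stageA m (∑ i, S.wt (P.val i 0)) P le_rfl
  set A := E₀ * P with hAdef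
  have h1 : (A⁻¹).val * A.val = 1 := A.inv_mul
  have hsum : ∑ k, (A⁻¹).val 0 k * A.val k 0 = 1 := by
    calc ∑ k, (A⁻¹).val 0 k * A.val k 0 = ((A⁻¹).val * A.val) 0 0 :=
          (Matrix.mul_apply).symm
      _ = (1 : Matrix (Fin (m+1)) (Fin (m+1)) L) 0 0 := by rw [h1]
      _ = 1 := Matrix.one_apply_eq 0
  have hg : A.val i₀ 0 ≠ 0 := by
    intro h0
    have hz : ∑ k, (A⁻¹).val 0 k * A.val k 0 = 0 :=
      Finset.sum_eq_zero fun k _ => by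
        by_cases hk : k = i₀
        · rw [hk, h0, mul_zero]
        · rw [hcol k hk, mul_zero]
    rw [hsum] at hz
    exact S.one_ne_zero' hz
  have hug : (A⁻¹).val 0 i₀ * A.val i₀ 0 = 1 := by
    rw [← hsum]
    exact (Finset.sum_eq_single_of_mem (f := fun k => (A⁻¹).val 0 k * A.val k 0)
      i₀ (Finset.mem_univ i₀)
      (fun k _ hk => by rw [hcol k hk, mul_zero])).symm
  have hgu := S.isUnit_of_left_inv hg hug
  set gU : Lˣ := ⟨A.val i₀ 0, (A⁻¹).val 0 i₀, hgu, hug⟩ with hgU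
  set E₂ := dUnit (fun k => if k = i₀ then gU⁻¹ else 1) with hE₂
  have hB : ∀ k l, (E₂ * A).val k l
      = (if k = i₀ then ((gU⁻¹ : Lˣ) : L) else (1:L)) * A.val k l := fun k l => by
    rw [Units.val_mul]
    have hval : (E₂).val
        = Matrix.diagonal (fun k => ((if k = i₀ then gU⁻¹ else 1 : Lˣ) : L)) := rfl
    rw [hval, Matrix.diagonal_mul]
    by_cases hk : k = i₀ <;> simp [hk]
  have hBcol : ∀ k, k ≠ i₀ → (E₂ * A).val k 0 = 0 := fun k hk => by
    rw [hB, if_neg hk, one_mul]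
    exact hcol k hk
  have hBi₀ : (E₂ * A).val i₀ 0 = 1 := by
    rw [hB, if_pos rfl]
    exact hug
  by_cases h0 : i₀ = 0
  · subst h0
    refine ⟨E₂ * E₀, mul_mem (Subgroup.subset_closure (dUnit_mem _)) hE₀, ?_, ?_⟩
    · rw [mul_assoc]; exact hBi₀
    · intro i hi; rw [mul_assoc]; exact hBcol i hi
  · have h0' : (0 : Fin (m+1)) ≠ i₀ := Ne.symm h0
    set E₃ := tUnit 0 i₀ h0' (1:L) with hE₃
    have hC : ∀ k, (E₃ * (E₂ * A)).val k 0
        = (E₂ * A).val k 0 + if k = 0 then (1:L) * (E₂ * A).val i₀ 0 else 0 := fun k => by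
      rw [Units.val_mul]
      exact rowop_apply 0 i₀ (1:L) (E₂ * A).val k 0
    have hC00 : (E₃ * (E₂ * A)).val 0 0 = 1 := by
      rw [hC, if_pos rfl, hBcol 0 h0', hBi₀, zero_add, one_mul]
    have hCi₀ : (E₃ * (E₂ * A)).val i₀ 0 = 1 := by
      rw [hC, if_neg h0, add_zero, hBi₀]
    have hCk : ∀ k, k ≠ 0 → k ≠ i₀ → (E₃ * (E₂ * A)).val k 0 = 0 := fun k hk hk' => by
      rw [hC, if_neg hk, add_zero, hBcol k hk']
    set E₄ := tUnit i₀ 0 h0 (-1 : L) with hE₄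
    have hD : ∀ k, (E₄ * (E₃ * (E₂ * A))).val k 0
        = (E₃ * (E₂ * A)).val k 0
          + if k = i₀ then (-1:L) * (E₃ * (E₂ * A)).val 0 0 else 0 := fun k => by
      rw [Units.val_mul]
      exact rowop_apply i₀ 0 (-1:L) (E₃ * (E₂ * A)).val k 0
    have hfinal0 : (E₄ * (E₃ * (E₂ * A))).val 0 0 = 1 := by
      rw [hD, if_neg h0', add_zero, hC00]
    have hfinal : ∀ i, i ≠ 0 → (E₄ * (E₃ * (E₂ * A))).val i 0 = 0 := by
      intro i hi
      by_cases hi' : i = i₀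
      · subst hi'
        rw [hD, if_pos rfl, hC00, hCi₀, neg_one_mul]
        exact add_neg_cancel 1
      · rw [hD, if_neg hi', add_zero, hCk i hi hi']
    have hEq : E₄ * (E₃ * (E₂ * E₀)) * P = E₄ * (E₃ * (E₂ * A)) := by
      rw [hAdef, mul_assoc, mul_assoc, mul_assoc]
    refine ⟨E₄ * (E₃ * (E₂ * E₀)), ?_, ?_, ?_⟩
    · exact mul_mem (Subgroup.subset_closure (tUnit_mem _ _ h0 _))
        (mul_mem (Subgroup.subset_closure (tUnit_mem _ _ h0' _))
          (mul_mem (Subgroup.subset_closure (dUnit_mem _)) hE₀))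
    · rw [hEq]; exact hfinal0
    · intro i hi; rw [hEq]; exact hfinal i hi

lemma stageC {m : ℕ} (s : Finset (Fin (m+1))) :
    (0 : Fin (m+1)) ∉ s → ∀ (A : (Matrix (Fin (m+1)) (Fin (m+1)) L)ˣ),
    A.val 0 0 = 1 → (∀ i, i ≠ 0 → A.val i 0 = 0) →
    ∃ Fu ∈ Subgroup.closure (ElemSet L (m+1)),
      ((A * Fu).val 0 0 = 1 ∧ (∀ i, i ≠ 0 → (A * Fu).val i 0 = 0)) ∧
      (∀ j ∈ s, (A * Fu).val 0 j = 0) ∧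
      (∀ j, j ∉ s → (A * Fu).val 0 j = A.val 0 j) := by
  classical
  induction s using Finset.induction_on with
  | empty =>
      intro _ A h1 h2
      exact ⟨1, one_mem _, by simpa [mul_one] using ⟨h1, h2⟩, by simp,
        fun j _ => by rw [mul_one]⟩
  | @insert a s' ha ih =>
      intro h0ins A hA1 hA2
      have ha0 : a ≠ 0 := by
        rintro rfl
        exact h0ins (Finset.mem_insert_self 0 s')
      have h0s : (0 : Fin (m+1)) ∉ s' := fun h => h0ins (Finset.mem_insert_of_mem h)
      have h0a : (0 : Fin (m+1)) ≠ a := Ne.symm ha0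
      set T := tUnit 0 a h0a (-(A.val 0 a)) with hT
      set A₁ := A * T with hA₁def
      have hA₁ : ∀ k l, A₁.val k l
          = A.val k l + if l = a then A.val k 0 * (-(A.val 0 a)) else 0 := fun k l => by
        rw [hA₁def, Units.val_mul]
        exact colop_apply 0 a (-(A.val 0 a)) A.val k l
      have hA₁00 : A₁.val 0 0 = 1 := by
        rw [hA₁, if_neg h0a, add_zero, hA1]
      have hA₁col : ∀ i, i ≠ 0 → A₁.val i 0 = 0 := fun i hi => by
        rw [hA₁, if_neg h0a, add_zero]
        exact hA2 i hi
      have hA₁0a : A₁.val 0 a = 0 := by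
        rw [hA₁, if_pos rfl, hA1, one_mul, add_neg_cancel]
      have hA₁0j : ∀ j, j ≠ a → A₁.val 0 j = A.val 0 j := fun j hj => by
        rw [hA₁, if_neg hj, add_zero]
      obtain ⟨Fu', hFu', ⟨hc1, hc2⟩, hs, hout⟩ := ih h0s A₁ hA₁00 hA₁col
      have hassoc : A * (T * Fu') = A₁ * Fu' := by rw [hA₁def, mul_assoc]
      refine ⟨T * Fu',
        mul_mem (Subgroup.subset_closure (tUnit_mem _ _ h0a _)) hFu', ?_, ?_, ?_⟩
      · rw [hassoc]; exact ⟨hc1, hc2⟩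
      · intro j hj
        rw [hassoc]
        rcases Finset.mem_insert.mp hj with rfl | hj'
        · rw [hout j ha]; exact hA₁0a
        · exact hs j hj'
      · intro j hj
        rw [hassoc, hout j (fun h => hj (Finset.mem_insert_of_mem h)),
          hA₁0j j (fun h => hj (by rw [h]; exact Finset.mem_insert_self a s'))]

end SLData

section Emb

variable {L : Type*} [Ring L] {m : ℕ}

/-- Embed an `m × m` matrix as the lower-right block of an `(m+1) × (m+1)` matrix
with `1` in the upper-left corner. -/
def embMat (M : Matrix (Fin m) (Fin m) L) : Matrix (Fin (m+1)) (Fin (m+1)) L :=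
  Matrix.of fun i j =>
    Fin.cases (Fin.cases (1 : L) (fun _ => 0) j)
      (fun i' => Fin.cases (0 : L) (fun j' => M i' j') j) i

@[simp] lemma embMat_00 (M : Matrix (Fin m) (Fin m) L) : embMat M 0 0 = 1 := rfl
@[simp] lemma embMat_0succ (M : Matrix (Fin m) (Fin m) L) (j : Fin m) :
    embMat M 0 j.succ = 0 := rfl
@[simp] lemma embMat_succ0 (M : Matrix (Fin m) (Fin m) L) (i : Fin m) :
    embMat M i.succ 0 = 0 := rfl
@[simp] lemma embMat_succsucc (M : Matrix (Fin m) (Fin m) L) (i j : Fin m) :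
    embMat M i.succ j.succ = M i j := rfl

lemma embMat_one : embMat (1 : Matrix (Fin m) (Fin m) L) = 1 := by
  ext i j
  induction i using Fin.cases with
  | zero =>
      induction j using Fin.cases with
      | zero => simp [Matrix.one_apply]
      | succ j => simp [Matrix.one_apply, (Fin.succ_ne_zero j).symm]
  | succ i =>
      induction j using Fin.cases with
      | zero => simp [Matrix.one_apply, Fin.succ_ne_zero i]
      | succ j => simp [Matrix.one_apply, Fin.succ_inj]

lemma embMat_mul (M N : Matrix (Fin m) (Fin m) L) :
    embMat (M * N) = embMat M * embMat N := by
  ext i j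
  rw [Matrix.mul_apply]
  induction i using Fin.cases with
  | zero =>
      induction j using Fin.cases with
      | zero => simp [Fin.sum_univ_succ]
      | succ j => simp [Fin.sum_univ_succ]
  | succ i =>
      induction j using Fin.cases with
      | zero => simp [Fin.sum_univ_succ]
      | succ j => simp [Fin.sum_univ_succ, Matrix.mul_apply]

/-- The embedding as a monoid hom. -/
def embHom : Matrix (Fin m) (Fin m) L →* Matrix (Fin (m+1)) (Fin (m+1)) L where
  toFun := embMat
  map_one' := embMat_one
  map_mul' := embMat_mul

lemma embHom_elem {Q : (Matrix (Fin m) (Fin m) L)ˣ} (hQ : Q ∈ ElemSet L m) :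
    Units.map (embHom (L := L) (m := m)) Q ∈ ElemSet L (m+1) := by
  rcases hQ with ⟨i, j, c, hij, hval⟩ | ⟨d, hval⟩
  · left
    refine ⟨i.succ, j.succ, c, fun h => hij (Fin.succ_inj.mp h), ?_⟩
    show embMat Q.val = _
    rw [hval]
    ext k l
    induction k using Fin.cases with
    | zero =>
        induction l using Fin.cases with
        | zero =>
            simp [Matrix.add_apply, Matrix.one_apply, Matrix.single,
              Fin.succ_ne_zero]
        | succ l =>
            simp [Matrix.add_apply, Matrix.one_apply, Matrix.single,
              (Fin.succ_ne_zero l).symm, Fin.succ_ne_zero]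
    | succ k =>
        induction l using Fin.cases with
        | zero =>
            simp [Matrix.add_apply, Matrix.one_apply, Matrix.single,
              Fin.succ_ne_zero k, Fin.succ_ne_zero]
        | succ l =>
            simp [Matrix.add_apply, Matrix.one_apply, Matrix.single,
              Fin.succ_inj]
  · right
    refine ⟨Fin.cases 1 d, ?_⟩
    show embMat Q.val = _
    rw [hval]
    ext k l
    induction k using Fin.cases with
    | zero =>
        induction l using Fin.cases with
        | zero => simp [Matrix.diagonal_apply_eq]
        | succ l => simp [Matrix.diagonal_apply_ne _ ((Fin.succ_ne_zero l).symm)]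
    | succ k =>
        induction l using Fin.cases with
        | zero => simp [Matrix.diagonal_apply_ne _ (Fin.succ_ne_zero k)]
        | succ l =>
            by_cases hkl : k = l
            · subst hkl; simp [Matrix.diagonal_apply_eq]
            · simp [Matrix.diagonal_apply_ne _ (fun h => hkl (Fin.succ_inj.mp h)),
                Matrix.diagonal_apply_ne _ hkl]

end Emb

namespace SLData

variable {K L : Type*} [DivisionRing K] [Ring L] (S : SLData K L)

include S in
lemma mem_closure : ∀ (m : ℕ) (P : (Matrix (Fin m) (Fin m) L)ˣ),
    P ∈ Subgroup.closure (ElemSet L m) := by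
  intro m
  induction m with
  | zero =>
      intro P
      have hP : P = 1 := Units.ext (Subsingleton.elim _ _)
      rw [hP]
      exact one_mem _
  | succ m ih =>
      intro P
      obtain ⟨E, hE, hE1, hE2⟩ := S.stageB m P
      obtain ⟨Fu, hFu, ⟨hc1, hc2⟩, hrow, -⟩ :=
        stageC (Finset.univ.erase 0) (by simp) (E * P) hE1 hE2
      set C := E * P * Fu with hC
      have hrow' : ∀ j : Fin m, C.val 0 j.succ = 0 := fun j =>
        hrow j.succ (Finset.mem_erase.mpr ⟨Fin.succ_ne_zero j, Finset.mem_univ _⟩)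
      have hcol' : ∀ i : Fin m, C.val i.succ 0 = 0 := fun i => hc2 i.succ (Fin.succ_ne_zero i)
      have h00 : C.val 0 0 = 1 := hc1
      have hCinv : C.val * (C⁻¹).val = 1 := C.mul_inv
      have hCinv2 : (C⁻¹).val * C.val = 1 := C.inv_mul
      set A₁ : Matrix (Fin m) (Fin m) L :=
        Matrix.of fun i j => C.val i.succ j.succ with hA₁
      set B₁ : Matrix (Fin m) (Fin m) L :=
        Matrix.of fun i j => (C⁻¹).val i.succ j.succ with hB₁
      have hAB : A₁ * B₁ = 1 := by
        ext i j
        rw [Matrix.mul_apply]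
        have hsum : ∑ k : Fin m, A₁ i k * B₁ k j
            = ∑ k : Fin (m+1), C.val i.succ k * (C⁻¹).val k j.succ := by
          rw [Fin.sum_univ_succ, hcol' i, zero_mul, zero_add]
          rfl
        rw [hsum, ← Matrix.mul_apply, hCinv]
        simp [Matrix.one_apply, Fin.succ_inj]
      have hBA : B₁ * A₁ = 1 := by
        ext i j
        rw [Matrix.mul_apply]
        have hsum : ∑ k : Fin m, B₁ i k * A₁ k j
            = ∑ k : Fin (m+1), (C⁻¹).val i.succ k * C.val k j.succ := by
          rw [Fin.sum_univ_succ, hrow' j, mul_zero, zero_add]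
          rfl
        rw [hsum, ← Matrix.mul_apply, hCinv2]
        simp [Matrix.one_apply, Fin.succ_inj]
      set P₁ : (Matrix (Fin m) (Fin m) L)ˣ := ⟨A₁, B₁, hAB, hBA⟩ with hP₁def
      have hP₁ := ih P₁
      have hCP : C = Units.map (embHom (L := L) (m := m)) P₁ := by
        apply Units.ext
        show C.val = embMat A₁
        ext k l
        induction k using Fin.cases with
        | zero =>
            induction l using Fin.cases with
            | zero => rw [embMat_00, h00]
            | succ l => rw [embMat_0succ, hrow' l]
        | succ k =>
            induction l using Fin.cases with
            | zero => rw [embMat_succ0, hcol' k]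
            | succ l => rfl
      have hCmem : C ∈ Subgroup.closure (ElemSet L (m+1)) := by
        rw [hCP]
        have h1 : Units.map (embHom (L := L) (m := m)) P₁
            ∈ Subgroup.map (Units.map (embHom (L := L) (m := m)))
              (Subgroup.closure (ElemSet L m)) :=
          Subgroup.mem_map_of_mem _ hP₁
        rw [MonoidHom.map_closure] at h1
        refine Subgroup.closure_mono ?_ h1
        rintro _ ⟨Q, hQ, rfl⟩
        exact embHom_elem hQ
      have hPfin : P = E⁻¹ * C * Fu⁻¹ := by rw [hC]; group
      rw [hPfin]
      exact mul_mem (mul_mem (inv_mem hE) hCmem) (inv_mem hFu)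

include S in
lemma exists_list (m : ℕ) (P : (Matrix (Fin m) (Fin m) L)ˣ) :
    ∃ lst : List ((Matrix (Fin m) (Fin m) L)ˣ),
      (∀ Q ∈ lst, Q ∈ ElemSet L m) ∧ P = lst.prod := by
  have h1 := S.mem_closure m P
  have h2 : P ∈ Submonoid.closure (ElemSet L m ∪ (ElemSet L m)⁻¹) := by
    rw [← Subgroup.closure_toSubmonoid]
    exact h1
  obtain ⟨lst, hmem, hprod⟩ := Submonoid.exists_list_of_mem_closure h2
  refine ⟨lst, fun Q hQ => ?_, hprod.symm⟩
  rcases hmem Q hQ with h | h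
  · exact h
  · -- Q⁻¹ ∈ ElemSet; show Q ∈ ElemSet
    rw [Set.mem_inv] at h
    rcases h with ⟨i, j, c, hij, hval⟩ | ⟨d, hval⟩
    · left
      have : Q⁻¹ = tUnit i j hij c := Units.ext hval
      refine ⟨i, j, -c, hij, ?_⟩
      have hQ' : Q = (tUnit i j hij c)⁻¹ := by rw [← this, inv_inv]
      rw [hQ']
      rfl
    · right
      have : Q⁻¹ = dUnit d := Units.ext hval
      refine ⟨fun i => (d i)⁻¹, ?_⟩
      have hQ' : Q = (dUnit d)⁻¹ := by rw [← this, inv_inv]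
      rw [hQ']
      rfl

end SLData

namespace SLData
variable {K L : Type*} [DivisionRing K] [Ring L] (S : SLData K L)
include S in
lemma unit_ne_zero (u : Lˣ) : (u : L) ≠ 0 := fun h =>
  S.one_ne_zero' (by rw [← u.mul_inv, h, zero_mul])
end SLData

theorem GL_skewLaurent_elementary_diagonal_degree_zero
    (K : Type*) [DivisionRing K] (σ : K ≃+* K)
    (L : Type*) [Ring L] (ι₀ : K →+* L) (hι₀ : Function.Injective ι₀) (t : Lˣ)
    (hcomm : ∀ a : K, ι₀ a * t = t * ι₀ (σ a))
    (rep : L → (ℤ →₀ K))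
    (hrep : ∀ x : L, x = (rep x).sum fun n a => ((t ^ n : Lˣ) : L) * ι₀ a)
    (hrep_unique : ∀ (x : L) (f : ℤ →₀ K),
      x = (f.sum fun n a => ((t ^ n : Lˣ) : L) * ι₀ a) → f = rep x)
    -- `F` is the right field of fractions of `L`
    (F : Type*) [DivisionRing F] (ι : L →+* F) (hι : Function.Injective ι)
    (hfrac : ∀ x : F, ∃ f g : L, g ≠ 0 ∧ x = ι f * (ι g)⁻¹)
    -- `D` is the extended degree homomorphism
    (D : Abelianization Fˣ →* Multiplicative ℤ)
    (hD : ∀ (f : L), f ≠ 0 → ∀ u : Fˣ, (u : F) = ι f →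
      D (Abelianization.of u) = Multiplicative.ofAdd (lauDeg rep f))
    (m : ℕ) (P : (Matrix (Fin m) (Fin m) L)ˣ) :
    (∃ lst : List (Matrix (Fin m) (Fin m) L)ˣ,
      (∀ Q ∈ lst,
        (∃ (i j : Fin m) (c : L), i ≠ j ∧
          Q.val = 1 + Matrix.single i j c) ∨
        (∃ d : Fin m → Lˣ,
          Q.val = Matrix.diagonal fun i => (d i : L))) ∧
      P = lst.prod) ∧
    (∀ δ : (Matrix (Fin m) (Fin m) F)ˣ →* Abelianization Fˣ,
      (∀ (i j : Fin m) (c : F), i ≠ j → ∀ Q : (Matrix (Fin m) (Fin m) F)ˣ,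
        Q.val = 1 + Matrix.single i j c → δ Q = 1) →
      (∀ (d : Fin m → Fˣ) (Q : (Matrix (Fin m) (Fin m) F)ˣ),
        Q.val = Matrix.diagonal (fun i => (d i : F)) →
        δ Q = ∏ i, Abelianization.of (d i)) →
      D (δ (Units.map (ι.mapMatrix).toMonoidHom P)) = 1) := by
  set S : SLData K L := ⟨σ, ι₀, hι₀, t, hcomm, rep, hrep, hrep_unique⟩ with hS
  obtain ⟨lst, hmem, hprod⟩ := S.exists_list m P
  constructor
  · exact ⟨lst, hmem, hprod⟩
  · intro δ hTr hDiag
    set EH : (Matrix (Fin m) (Fin m) L)ˣ →* Multiplicative ℤ :=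
      D.comp (δ.comp (Units.map (ι.mapMatrix).toMonoidHom)) with hEH
    show EH P = 1
    rw [hprod, map_list_prod EH lst]
    apply List.prod_eq_one
    intro x hx
    obtain ⟨Q, hQ, rfl⟩ := List.mem_map.mp hx
    rcases hmem Q hQ with ⟨i, j, c, hij, hval⟩ | ⟨d, hval⟩
    · have hval' : (Units.map (ι.mapMatrix).toMonoidHom Q).val
          = 1 + Matrix.single i j (ι c) := by
        show ι.mapMatrix Q.val = _
        rw [hval, map_add, map_one, RingHom.mapMatrix_apply]
        congr 1
        ext a b
        simp [Matrix.map_apply, Matrix.single, apply_ite ι]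
      show D (δ (Units.map (ι.mapMatrix).toMonoidHom Q)) = 1
      rw [hTr i j (ι c) hij _ hval', map_one]
    · set d' : Fin m → Fˣ := fun i => Units.map ι.toMonoidHom (d i) with hd'
      have hval' : (Units.map (ι.mapMatrix).toMonoidHom Q).val
          = Matrix.diagonal (fun i => (d' i : F)) := by
        show ι.mapMatrix Q.val = _
        rw [hval, RingHom.mapMatrix_apply, Matrix.diagonal_map (map_zero ι)]
        rfl
      show D (δ (Units.map (ι.mapMatrix).toMonoidHom Q)) = 1
      rw [hDiag d' _ hval', map_prod]
      apply Finset.prod_eq_one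
      intro i _
      have h1 : ((d' i : Fˣ) : F) = ι ((d i : Lˣ) : L) := rfl
      rw [hD ((d i : Lˣ) : L) (S.unit_ne_zero (d i)) (d' i) h1]
      have h2 : lauDeg rep ((d i : Lˣ) : L) = 0 := S.lauDeg_unit (d i)
      rw [h2]
      rfl
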